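/- Let $\theta \in (0,1]$. Define $P = (\cos(\theta/2), \sin(\theta/2))$, $Q = (\cos(\theta^2/4), \sin(\theta^2/4))$, and $V = (\cos(\theta/2), 0)$ in $\mathbb{R}^2$. Then the dot product $\overrightarrow{QP} \cdot \overrightarrow{QV} < 0$; that is, the angle $\angle PQV$ is obtuse. -/

import Mathlib

open Real

set_option maxHeartbeats 1000000 in
lemma stmt_5_aux (a b m d : ℝ) (ha0 : 0 < a) (ha1 : a ≤ 1 / 2)
    (hba : b = a ^ 2) (hm : m = (a + b) / 2) (hd : d = (a - b) / 2) :
    (cos a - cos b) ^ 2 + (sin a - sin b) * (0 - sin b) < 0 := by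
  have hb0 : 0 < b := by rw [hba]; positivity
  have hblta : b < a := by nlinarith
  have hm0 : 0 < m := by rw [hm]; linarith
  have hd0 : 0 < d := by rw [hd]; linarith
  have hmlt : m ≤ 3 / 8 := by rw [hm]; nlinarith
  have hdlt : d < 1 / 4 := by rw [hd]; nlinarith
  have hblt : b ≤ 1 / 4 := by nlinarith
  have hm3 : m ≤ 3 * a / 4 := by rw [hm, hba]; nlinarith
  have hd2 : d ≤ a / 2 := by rw [hd]; linarith
  have hpi : (3 : ℝ) < π := by linarith [pi_gt_three]
  have hsm0 : 0 < sin m := sin_pos_of_pos_of_lt_pi hm0 (by linarith)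
  have hsd0 : 0 < sin d := sin_pos_of_pos_of_lt_pi hd0 (by linarith)
  have hsm : sin m < m := sin_lt hm0
  have hsd : sin d < d := sin_lt hd0
  have hsb : b - b ^ 3 / 4 < sin b := by
    have := sin_gt_sub_cube hb0; linarith [pow_pos hb0 3]
  have hcm : 1 - m ^ 2 / 2 < cos m := one_sub_sq_div_two_lt_cos (ne_of_gt hm0)
  have hcm0 : (0 : ℝ) < 1 - m ^ 2 / 2 := by nlinarith
  have hbb : b * b ≤ 1 / 16 := by nlinarith
  have hb3 : b ^ 3 ≤ b / 16 := by nlinarith [mul_le_mul_of_nonneg_left hbb hb0.le]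
  have hsb0 : (0 : ℝ) < b - b ^ 3 / 4 := by linarith
  have hcc : cos a - cos b = -2 * sin m * sin d := by
    rw [cos_sub_cos, hm, hd]
  have hss : sin a - sin b = 2 * sin d * cos m := by
    rw [sin_sub_sin, hm, hd]
  have key : 2 * sin m ^ 2 * sin d < cos m * sin b := by
    have h1a : sin m ^ 2 < m ^ 2 := by
      have := mul_self_lt_mul_self hsm0.le hsm
      nlinarith [this]
    have h1b : sin m ^ 2 * sin d < m ^ 2 * d :=
      mul_lt_mul' h1a.le hsd hsd0.le (pow_pos hm0 2)
    have h1 : 2 * sin m ^ 2 * sin d < 2 * m ^ 2 * d := by linarith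
    -- bound 2 * m^2 * d ≤ 9/32 * b
    have e1 : m * m ≤ (3 * a / 4) * (3 * a / 4) := mul_self_le_mul_self hm0.le hm3
    have e2 : m * m * d ≤ (3 * a / 4) * (3 * a / 4) * (a / 2) :=
      mul_le_mul e1 hd2 hd0.le (by positivity)
    have e3 : a ^ 3 ≤ a ^ 2 / 2 := by nlinarith
    have h3 : 2 * m ^ 2 * d ≤ 9 / 32 * b := by rw [hba]; nlinarith
    -- bound 9/32 * b < cos m * sin b
    have f1 : (119 : ℝ) / 128 ≤ 1 - m ^ 2 / 2 := by nlinarith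
    have f2 : 63 / 64 * b ≤ b - b ^ 3 / 4 := by linarith
    have f3 : (119 : ℝ) / 128 * (63 / 64 * b) ≤ (1 - m ^ 2 / 2) * (b - b ^ 3 / 4) :=
      mul_le_mul f1 f2 (by positivity) (by linarith)
    have h2 : (1 - m ^ 2 / 2) * (b - b ^ 3 / 4) < cos m * sin b :=
      mul_lt_mul' hcm.le hsb hsb0.le (lt_trans hcm0 hcm)
    linarith
  rw [hcc, hss]
  nlinarith [mul_lt_mul_of_pos_left key hsd0]

/-- With `P = (cos(θ/2), sin(θ/2))`, `Q = (cos(θ²/4), sin(θ²/4))`,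
`V = (cos(θ/2), 0)` for `θ ∈ (0,1]`, the dot product `(P - Q) · (V - Q)` is
negative, i.e. the angle `∠PQV` is obtuse. -/
theorem stmt_5 (θ : ℝ) (hθ0 : 0 < θ) (hθ1 : θ ≤ 1) :
    let P : ℝ × ℝ := (cos (θ / 2), sin (θ / 2))
    let Q : ℝ × ℝ := (cos (θ ^ 2 / 4), sin (θ ^ 2 / 4))
    let V : ℝ × ℝ := (cos (θ / 2), 0)
    (P.1 - Q.1) * (V.1 - Q.1) + (P.2 - Q.2) * (V.2 - Q.2) < 0 := by
  intro P Q V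
  have h := stmt_5_aux (θ / 2) (θ ^ 2 / 4) ((θ / 2 + θ ^ 2 / 4) / 2)
    ((θ / 2 - θ ^ 2 / 4) / 2) (by linarith) (by linarith) (by ring) rfl rfl
  simp only [P, Q, V]
  nlinarith [h]
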